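/- Let (A, ∘, ρ, ⟨·,·⟩) be a Courant algebroid and N an orthogonal (N* = −N) Courant-Nijenhuis tensor, i.e. the Nijenhuis torsion Tor_N(X,Y) = NX∘NY − N(X∘_N Y) vanishes. Then N² commutes with left multiplication: X∘N²Y = N²(X∘Y) for all X, Y. -/
import Mathlib


/-- On a Courant algebroid, if `N` is an orthogonal (`N* = -N`)
Courant-Nijenhuis tensor (vanishing Nijenhuis torsion), then `N²` commutes
with left multiplication: `X∘N²Y = N²(X∘Y)`. -/
theorem nsq_commutes_of_orthogonal_nijenhuis
    {A F : Type*} [AddCommGroup A] [Module ℝ A] [AddCommGroup F] [Module ℝ F]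
    (m : A →ₗ[ℝ] A →ₗ[ℝ] A)           -- the Leibniz product ∘
    (B : A →ₗ[ℝ] A →ₗ[ℝ] F)           -- the pairing ⟨·,·⟩
    (ρ : A →ₗ[ℝ] F →ₗ[ℝ] F)           -- the anchor acting on scalars
    (jacobi : ∀ X Y Z : A, m (m X Y) Z = m X (m Y Z) - m Y (m X Z))
    (hsym : ∀ X Y : A, B X Y = B Y X)
    (hnondeg : ∀ a : A, (∀ b : A, B a b = 0) → a = 0)
    (h4 : ∀ X Y : A, ρ X (B Y Y) = (2 : ℝ) • B X (m Y Y))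
    (h5 : ∀ X Y : A, ρ X (B Y Y) = (2 : ℝ) • B (m X Y) Y)
    (N : A →ₗ[ℝ] A)
    (horth : ∀ X Y : A, B (N X) Y = - B X (N Y))
    (cN : A → A → A)
    (hcN : ∀ X Y : A, cN X Y = m (N X) Y + m X (N Y) - N (m X Y))
    (torsion_zero : ∀ X Y : A, m (N X) (N Y) - N (cN X Y) = 0) :
    ∀ X Y : A, m X (N (N Y)) = N (N (m X Y)) := by
  -- polarized invariance: ρ X ⟨Y,Z⟩ = ⟨X∘Y,Z⟩ + ⟨X∘Z,Y⟩
  have inv5 : ∀ X Y Z : A, ρ X (B Y Z) = B (m X Y) Z + B (m X Z) Y := by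
    intro X Y Z
    have h := h5 X (Y + Z)
    have hY := h5 X Y
    have hZ := h5 X Z
    simp only [map_add, LinearMap.add_apply, smul_add] at h
    rw [hsym Z Y] at h
    have h2 : (2 : ℝ) • ρ X (B Y Z) =
        (2 : ℝ) • (B (m X Y) Z + B (m X Z) Y) := by
      linear_combination (norm := module) h - hY - hZ
    have := smul_right_injective F (two_ne_zero (α := ℝ)) h2
    exact this
  -- key lemma: cN X (N Z) = N ((N X) ∘ Z)
  have key : ∀ X Z : A, cN X (N Z) = N (m (N X) Z) := by
    intro X Z
    have hz : ∀ W : A, B (cN X (N Z) - N (m (N X) Z)) W = 0 := by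
      intro W
      have e1 := inv5 (N X) (N Z) W
      have e2 := inv5 X (N (N Z)) W
      have e3 := inv5 X (N Z) (N W)
      have e4 := inv5 (N X) Z (N W)
      have r1 : ρ (N X) (B (N Z) W) = - ρ (N X) (B Z (N W)) := by
        rw [horth Z W, map_neg]
      have r2 : ρ X (B (N (N Z)) W) = - ρ X (B (N Z) (N W)) := by
        rw [horth (N Z) W, map_neg]
      have o3 : B (N (m X (N Z))) W = - B (m X (N Z)) (N W) := horth _ _
      have o4 : B (N (m (N X) Z)) W = - B (m (N X) Z) (N W) := horth _ _
      have o5 : B (N (m X W)) (N Z) = - B (m X W) (N (N Z)) := horth _ _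
      have t1 : m (N X) (N W) = N (cN X W) := sub_eq_zero.mp (torsion_zero X W)
      have tB : B (m (N X) (N W)) Z = B (N (cN X W)) Z := by rw [t1]
      have t2 : B (N (cN X W)) Z = - B (cN X W) (N Z) := horth _ _
      have c : B (cN X W) (N Z) =
          B (m (N X) W) (N Z) + B (m X (N W)) (N Z) - B (N (m X W)) (N Z) := by
        rw [hcN]
        simp only [map_add, map_sub, LinearMap.add_apply, LinearMap.sub_apply]
      rw [hcN X (N Z)]
      simp only [map_add, map_sub, LinearMap.add_apply, LinearMap.sub_apply]
      linear_combination (norm := module)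
        -e1 - e2 - e3 - e4 + r1 + r2 - o3 - o4 - o5 - tB - t2 + c
    exact sub_eq_zero.mp (hnondeg _ hz)
  intro X Y
  have h1 : cN X (N Y) = N (m (N X) Y) := key X Y
  have h2 : m (N X) (N Y) = N (cN X Y) := by
    have := torsion_zero X Y
    exact sub_eq_zero.mp this
  have e := hcN X (N Y)
  rw [h1, h2, hcN X Y] at e
  simp only [map_add, map_sub] at e
  linear_combination (norm := module) -e
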